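/- If f and g are nonzero elements of a Hardy field (germs at infinity of real functions closed under arithmetic operations and differentiation, forming a field), then the limit as x → ∞ of log|f(x)| / log|g(x)| exists in the extended reals ℝ ∪ {-∞, +∞}. -/

import Mathlib

open Filter

/-- A Hardy field: a subring of the ring of germs at `+∞` of real functions that
forms a field (every nonzero element has a multiplicative inverse in it) and is
closed under differentiation (every element has a representative that is
eventually differentiable and whose derivative again lies in the subring). -/
def IsHardyField (S : Subring (Filter.Germ (Filter.atTop : Filter ℝ) ℝ)) : Prop :=
  (∀ f ∈ S, f ≠ 0 → ∃ g ∈ S, f * g = 1) ∧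
  ∀ f ∈ S, ∃ F : ℝ → ℝ,
    ((F : Filter.Germ (Filter.atTop : Filter ℝ) ℝ) = f) ∧
    (∀ᶠ x in Filter.atTop, DifferentiableAt ℝ F x) ∧
    ((deriv F : Filter.Germ (Filter.atTop : Filter ℝ) ℝ) ∈ S)

open Set Real Topology

local notation "G∞" => Filter.Germ (Filter.atTop : Filter ℝ) ℝ

private lemma pos_on_ray {H : ℝ → ℝ} {a : ℝ} (hcont : ContinuousOn H (Ici a))
    (hne : ∀ x ∈ Ici a, H x ≠ 0) (hpos : 0 < H a) : ∀ x ∈ Ici a, 0 < H x := by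
  intro x hx
  rcases lt_or_gt_of_ne (hne x hx) with h' | h'
  · exfalso
    have hsub : uIcc a x ⊆ Ici a := by
      rw [Set.uIcc_of_le hx]
      exact fun y hy => hy.1
    have h0 : (0:ℝ) ∈ uIcc (H a) (H x) := by
      rw [Set.mem_uIcc]; right; exact ⟨h'.le, hpos.le⟩
    obtain ⟨y, hy, hy0⟩ := intermediate_value_uIcc (hcont.mono hsub) h0
    exact hne y (hsub hy) hy0
  · exact h'

-- eventual sign of a Hardy field element, for any representative
lemma hardy_sign (S : Subring G∞) (hS : IsHardyField S) (h : G∞) (hh : h ∈ S)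
    (D : ℝ → ℝ) (hD : (D : G∞) = h) :
    (∀ᶠ x in atTop, 0 ≤ D x) ∨ (∀ᶠ x in atTop, D x ≤ 0) := by
  by_cases h0 : h = 0
  · left
    have hD0 : (D : G∞) = ((0 : ℝ → ℝ) : G∞) := by simpa [h0] using hD
    filter_upwards [Filter.Germ.coe_eq.mp hD0] with x hx
    simp [hx]
  · obtain ⟨k, hkS, hk1⟩ := hS.1 h hh h0
    obtain ⟨K, hK⟩ := Quotient.exists_rep k
    obtain ⟨H, hHh, hHdiff, -⟩ := hS.2 h hh
    have hKk : ((K : ℝ → ℝ) : G∞) = k := hK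
    have hne : ∀ᶠ x in atTop, H x ≠ 0 := by
      have h1 : (H : G∞) * (K : G∞) = 1 := by rw [hHh, hKk]; exact hk1
      have h2 : ((fun x => H x * K x : ℝ → ℝ) : G∞) = ((fun _ => (1:ℝ) : ℝ → ℝ) : G∞) := h1
      filter_upwards [Filter.Germ.coe_eq.mp h2] with x hx hx0
      rw [hx0, zero_mul] at hx
      exact one_ne_zero hx.symm
    obtain ⟨a, ha⟩ := (hHdiff.and hne).exists_forall_of_atTop
    have hcont : ContinuousOn H (Ici a) := fun x hx => ((ha x hx).1.continuousAt).continuousWithinAt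
    have hne' : ∀ x ∈ Ici a, H x ≠ 0 := fun x hx => (ha x hx).2
    have hsign : (∀ x ∈ Ici a, 0 < H x) ∨ (∀ x ∈ Ici a, H x < 0) := by
      rcases lt_or_gt_of_ne (hne' a Set.self_mem_Ici) with hneg | hpos
      · right
        have hp := pos_on_ray (hcont.neg) (fun x hx h0' => hne' x hx (neg_eq_zero.mp h0'))
          (by simpa using hneg)
        intro x hx
        simpa using hp x hx
      · exact Or.inl (pos_on_ray hcont hne' hpos)
    have hDH : ∀ᶠ x in atTop, D x = H x := by
      have : (D : G∞) = (H : G∞) := by rw [hD, hHh]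
      exact Filter.Germ.coe_eq.mp this
    rcases hsign with hs | hs
    · left
      filter_upwards [hDH, eventually_ge_atTop a] with x hx hxa
      rw [hx]; exact (hs x hxa).le
    · right
      filter_upwards [hDH, eventually_ge_atTop a] with x hx hxa
      rw [hx]; exact (hs x hxa).le

lemma tendsto_of_monotoneOn {U : ℝ → ℝ} {a : ℝ} (h : MonotoneOn U (Ici a)) :
    ∃ L : EReal, Tendsto (fun x => (U x : EReal)) atTop (𝓝 L) := by
  set g : ℝ → EReal := fun x => ((U (max x a) : ℝ) : EReal) with hgdef
  have hg : Monotone g := by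
    intro x y hxy
    exact EReal.coe_le_coe_iff.2 (h (le_max_right x a) (le_max_right y a)
      (max_le_max hxy le_rfl))
  refine ⟨⨆ x, g x, ?_⟩
  have ht := tendsto_atTop_iSup hg
  apply ht.congr'
  filter_upwards [eventually_ge_atTop a] with x hx
  simp [hgdef, max_eq_left hx]

lemma tendsto_of_antitoneOn {U : ℝ → ℝ} {a : ℝ} (h : AntitoneOn U (Ici a)) :
    ∃ L : EReal, Tendsto (fun x => (U x : EReal)) atTop (𝓝 L) := by
  obtain ⟨L, hL⟩ := tendsto_of_monotoneOn h.neg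
  refine ⟨-L, ?_⟩
  have : (fun x => ((U x : ℝ) : EReal)) = fun x => -(((-U x : ℝ)) : EReal) := by
    funext x; rw [EReal.coe_neg, neg_neg]
  rw [this]
  exact hL.neg

lemma tendsto_of_deriv_sign {U : ℝ → ℝ} {a : ℝ}
    (hd : ∀ x ∈ Ici a, DifferentiableAt ℝ U x)
    (hs : (∀ x ∈ Ici a, 0 ≤ deriv U x) ∨ (∀ x ∈ Ici a, deriv U x ≤ 0)) :
    ∃ L : EReal, Tendsto (fun x => (U x : EReal)) atTop (𝓝 L) := by
  have hcont : ContinuousOn U (Ici a) := fun x hx => ((hd x hx).continuousAt).continuousWithinAt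
  have hdiff : DifferentiableOn ℝ U (interior (Ici a)) := by
    rw [interior_Ici]
    exact fun x hx => (hd x (Set.mem_Ici.mpr (le_of_lt hx))).differentiableWithinAt
  rcases hs with hs | hs
  · exact tendsto_of_monotoneOn (monotoneOn_of_deriv_nonneg (convex_Ici a) hcont hdiff
      (by rw [interior_Ici]; exact fun x hx => hs x (Set.mem_Ici.mpr (le_of_lt hx))))
  · exact tendsto_of_antitoneOn (antitoneOn_of_deriv_nonpos (convex_Ici a) hcont hdiff
      (by rw [interior_Ici]; exact fun x hx => hs x (Set.mem_Ici.mpr (le_of_lt hx))))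

-- any representative of a Hardy field germ has a limit in EReal
lemma hardy_limit (S : Subring G∞) (hS : IsHardyField S) (h : G∞) (hh : h ∈ S)
    (H : ℝ → ℝ) (hH : (H : G∞) = h) :
    ∃ L : EReal, Tendsto (fun x => (H x : EReal)) atTop (𝓝 L) := by
  obtain ⟨F, hFh, hFdiff, hF'S⟩ := hS.2 h hh
  have hsign := hardy_sign S hS _ hF'S (deriv F) rfl
  have hHF : ∀ᶠ x in atTop, H x = F x := by
    have : (H : G∞) = (F : G∞) := by rw [hH, hFh]
    exact Filter.Germ.coe_eq.mp this
  have key : ∃ L : EReal, Tendsto (fun x => (F x : EReal)) atTop (𝓝 L) := by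
    rcases hsign with hs | hs
    · obtain ⟨a, ha⟩ := (hFdiff.and hs).exists_forall_of_atTop
      exact tendsto_of_deriv_sign (fun x hx => (ha x hx).1) (Or.inl fun x hx => (ha x hx).2)
    · obtain ⟨a, ha⟩ := (hFdiff.and hs).exists_forall_of_atTop
      exact tendsto_of_deriv_sign (fun x hx => (ha x hx).1) (Or.inr fun x hx => (ha x hx).2)
  obtain ⟨L, hL⟩ := key
  refine ⟨L, hL.congr' ?_⟩
  filter_upwards [hHF] with x hx
  rw [hx]

-- strict eventual sign for nonzero elements
lemma hardy_sign_strict (S : Subring G∞) (hS : IsHardyField S) (h : G∞) (hh : h ∈ S)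
    (h0 : h ≠ 0) (D : ℝ → ℝ) (hD : (D : G∞) = h) :
    (∀ᶠ x in atTop, 0 < D x) ∨ (∀ᶠ x in atTop, D x < 0) := by
  obtain ⟨k, hkS, hk1⟩ := hS.1 h hh h0
  obtain ⟨K, hK⟩ := Quotient.exists_rep k
  have hKk : ((K : ℝ → ℝ) : G∞) = k := hK
  have hne : ∀ᶠ x in atTop, D x ≠ 0 := by
    have h1 : (D : G∞) * (K : G∞) = 1 := by rw [hD, hKk]; exact hk1
    have h2 : ((fun x => D x * K x : ℝ → ℝ) : G∞) = ((fun _ => (1:ℝ) : ℝ → ℝ) : G∞) := h1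
    filter_upwards [Filter.Germ.coe_eq.mp h2] with x hx hx0
    rw [hx0, zero_mul] at hx
    exact one_ne_zero hx.symm
  rcases hardy_sign S hS h hh D hD with hs | hs
  · left; filter_upwards [hs, hne] with x h1 h2 using lt_of_le_of_ne h1 (Ne.symm h2)
  · right; filter_upwards [hs, hne] with x h1 h2 using lt_of_le_of_ne h1 h2

-- core mean value inequality
lemma sub_le_mul_sub {U V : ℝ → ℝ} {a K : ℝ}
    (hU : ∀ x ∈ Ici a, DifferentiableAt ℝ U x) (hV : ∀ x ∈ Ici a, DifferentiableAt ℝ V x)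
    (h : ∀ x ∈ Ici a, deriv U x ≤ K * deriv V x) :
    ∀ x ∈ Ici a, U x - U a ≤ K * (V x - V a) := by
  set W := fun x => U x - K * V x with hWdef
  have hWd : ∀ x ∈ Ici a, DifferentiableAt ℝ W x :=
    fun x hx => (hU x hx).sub ((hV x hx).const_mul K)
  have hW' : ∀ x ∈ interior (Ici a), deriv W x ≤ 0 := by
    rw [interior_Ici]
    intro x hx
    have hx' : x ∈ Ici a := Set.mem_Ici.mpr (le_of_lt hx)
    rw [hWdef]
    rw [deriv_fun_sub (hU x hx') ((hV x hx').const_mul K), deriv_const_mul K (hV x hx')]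
    linarith [h x hx']
  have hanti : AntitoneOn W (Ici a) := by
    refine antitoneOn_of_deriv_nonpos (convex_Ici a) ?_ ?_ hW'
    · exact fun x hx => ((hWd x hx).continuousAt).continuousWithinAt
    · rw [interior_Ici]; exact fun x hx => (hWd x (Set.mem_Ici.mpr (le_of_lt hx))).differentiableWithinAt
  intro x hx
  have := hanti Set.self_mem_Ici hx hx
  simp only [hWdef] at this
  linarith

lemma mul_sub_le_sub {U V : ℝ → ℝ} {a K : ℝ}
    (hU : ∀ x ∈ Ici a, DifferentiableAt ℝ U x) (hV : ∀ x ∈ Ici a, DifferentiableAt ℝ V x)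
    (h : ∀ x ∈ Ici a, K * deriv V x ≤ deriv U x) :
    ∀ x ∈ Ici a, K * (V x - V a) ≤ U x - U a := by
  set W := fun x => U x - K * V x with hWdef
  have hWd : ∀ x ∈ Ici a, DifferentiableAt ℝ W x :=
    fun x hx => (hU x hx).sub ((hV x hx).const_mul K)
  have hW' : ∀ x ∈ interior (Ici a), 0 ≤ deriv W x := by
    rw [interior_Ici]
    intro x hx
    have hx' : x ∈ Ici a := Set.mem_Ici.mpr (le_of_lt hx)
    rw [hWdef]
    rw [deriv_fun_sub (hU x hx') ((hV x hx').const_mul K), deriv_const_mul K (hV x hx')]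
    linarith [h x hx']
  have hmono : MonotoneOn W (Ici a) := by
    refine monotoneOn_of_deriv_nonneg (convex_Ici a) ?_ ?_ hW'
    · exact fun x hx => ((hWd x hx).continuousAt).continuousWithinAt
    · rw [interior_Ici]; exact fun x hx => (hWd x (Set.mem_Ici.mpr (le_of_lt hx))).differentiableWithinAt
  intro x hx
  have := hmono Set.self_mem_Ici hx hx
  simp only [hWdef] at this
  linarith

lemma hopital_top_top {U V : ℝ → ℝ} {a : ℝ}
    (hU : ∀ x ∈ Ici a, DifferentiableAt ℝ U x) (hV : ∀ x ∈ Ici a, DifferentiableAt ℝ V x)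
    (hV' : ∀ x ∈ Ici a, 0 < deriv V x)
    (hVtop : Tendsto V atTop atTop)
    (hc : Tendsto (fun x => deriv U x / deriv V x) atTop atTop) :
    Tendsto (fun x => ((U x / V x : ℝ) : EReal)) atTop (𝓝 ⊤) := by
  rw [EReal.tendsto_nhds_top_iff_real]
  intro r
  set M : ℝ := r + 2 with hM
  obtain ⟨a₁, ha₁⟩ := (hc.eventually_ge_atTop M).exists_forall_of_atTop
  set a' : ℝ := max a a₁ with ha'
  have haa : a ≤ a' := le_max_left _ _
  have hsub : Ici a' ⊆ Ici a := fun x hx => le_trans haa hx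
  have hUV : ∀ x ∈ Ici a', M * (V x - V a') ≤ U x - U a' := by
    refine mul_sub_le_sub (fun x hx => hU x (hsub hx)) (fun x hx => hV x (hsub hx)) ?_
    intro x hx
    have hVpos := hV' x (hsub hx)
    have hMle : M ≤ deriv U x / deriv V x := ha₁ x (le_trans (le_max_right a a₁) hx)
    exact (le_div_iff₀ hVpos).mp hMle
  set C : ℝ := U a' - M * V a' with hC
  have key : ∀ x ∈ Ici a', M * V x + C ≤ U x := by
    intro x hx
    have := hUV x hx
    simp only [hC]
    nlinarith
  filter_upwards [hVtop.eventually_ge_atTop (max 1 |C|), eventually_ge_atTop a'] with x hVx hax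
  have hV1 : (1:ℝ) ≤ V x := le_trans (le_max_left _ _) hVx
  have hVpos : (0:ℝ) < V x := lt_of_lt_of_le one_pos hV1
  have hCb : |C| ≤ V x := le_trans (le_max_right _ _) hVx
  have hk := key x hax
  have h1 : M + C / V x ≤ U x / V x := by
    have h2 : (M * V x + C) / V x ≤ U x / V x := by gcongr
    have h3 : (M * V x + C) / V x = M + C / V x := by field_simp
    linarith [h2, h3.symm.le]
  have h4 : (-1 : ℝ) ≤ C / V x := by
    rw [le_div_iff₀ hVpos]
    have := neg_abs_le C
    nlinarith
  show (r : EReal) < ((U x / V x : ℝ) : EReal)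
  rw [EReal.coe_lt_coe_iff]
  linarith

lemma tendsto_coe_atTop_iff {α : Type*} {f : α → ℝ} {l : Filter α} :
    Tendsto (fun x => ((f x : ℝ) : EReal)) l (𝓝 ⊤) ↔ Tendsto f l atTop := by
  rw [EReal.tendsto_nhds_top_iff_real, tendsto_atTop]
  constructor
  · intro h b
    filter_upwards [h b] with x hx
    exact le_of_lt (EReal.coe_lt_coe_iff.mp hx)
  · intro h b
    filter_upwards [h (b + 1)] with x hx
    exact EReal.coe_lt_coe_iff.mpr (lt_of_lt_of_le (lt_add_one b) hx)

lemma tendsto_coe_atBot_iff {α : Type*} {f : α → ℝ} {l : Filter α} :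
    Tendsto (fun x => ((f x : ℝ) : EReal)) l (𝓝 ⊥) ↔ Tendsto f l atBot := by
  have hfun : (fun x => ((-f x : ℝ) : EReal)) = fun x => -((f x : ℝ) : EReal) := by
    funext x; rw [EReal.coe_neg]
  constructor
  · intro h
    rw [← tendsto_neg_atTop_iff, ← tendsto_coe_atTop_iff, hfun]
    have hn := h.neg
    simpa using hn
  · intro h
    have h1 := tendsto_coe_atTop_iff.mpr (tendsto_neg_atTop_iff.mpr h)
    rw [hfun] at h1
    have h2 := h1.neg
    simpa using h2

lemma hopital_ereal {U V : ℝ → ℝ} {a : ℝ} {c : EReal}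
    (hU : ∀ x ∈ Ici a, DifferentiableAt ℝ U x) (hV : ∀ x ∈ Ici a, DifferentiableAt ℝ V x)
    (hV' : ∀ x ∈ Ici a, 0 < deriv V x)
    (hVtop : Tendsto V atTop atTop)
    (hc : Tendsto (fun x => ((deriv U x / deriv V x : ℝ) : EReal)) atTop (𝓝 c)) :
    Tendsto (fun x => ((U x / V x : ℝ) : EReal)) atTop (𝓝 c) := by
  induction c using EReal.rec with
  | top => exact hopital_top_top hU hV hV' hVtop (tendsto_coe_atTop_iff.mp hc)
  | bot =>
    have hU' : ∀ x ∈ Ici a, DifferentiableAt ℝ (fun y => -U y) x := fun x hx => (hU x hx).neg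
    have hc2 : Tendsto (fun x => deriv (fun y => -U y) x / deriv V x) atTop atTop := by
      have h1 := tendsto_coe_atBot_iff.mp hc
      have h2 := tendsto_neg_atTop_iff.mpr h1
      refine h2.congr fun x => ?_
      rw [deriv.fun_neg, neg_div]
    have htop := hopital_top_top hU' hV hV' hVtop hc2
    have hfun : (fun x => (((fun y => -U y) x / V x : ℝ) : EReal)) =
        fun x => -(((U x / V x : ℝ)) : EReal) := by
      funext x
      rw [neg_div, ← EReal.coe_neg]
    rw [hfun] at htop
    have := htop.neg
    simpa using this
  | coe c =>
    rw [EReal.tendsto_coe] at hc ⊢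
    rw [Metric.tendsto_atTop] at hc ⊢
    intro ε hε
    set δ : ℝ := ε / 3 with hδdef
    have hδ : 0 < δ := by positivity
    obtain ⟨N, hN⟩ := hc δ hδ
    set a' : ℝ := max a N with ha'
    have hsub : Ici a' ⊆ Ici a := fun x hx => le_trans (le_max_left a N) hx
    have hbd : ∀ x ∈ Ici a', |deriv U x / deriv V x - c| < δ := by
      intro x hx
      have := hN x (le_trans (le_max_right a N) hx)
      rwa [Real.dist_eq] at this
    have hup : ∀ x ∈ Ici a', deriv U x ≤ (c + δ) * deriv V x := by
      intro x hx
      have h1 := (abs_sub_lt_iff.mp (hbd x hx)).1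
      have hVpos := hV' x (hsub hx)
      have := (div_lt_iff₀ hVpos).mp (by linarith : deriv U x / deriv V x < c + δ)
      linarith
    have hlo : ∀ x ∈ Ici a', (c - δ) * deriv V x ≤ deriv U x := by
      intro x hx
      have h1 := (abs_sub_lt_iff.mp (hbd x hx)).2
      have hVpos := hV' x (hsub hx)
      have := (lt_div_iff₀ hVpos).mp (by linarith : c - δ < deriv U x / deriv V x)
      linarith
    have h1 := sub_le_mul_sub (fun x hx => hU x (hsub hx)) (fun x hx => hV x (hsub hx)) hup
    have h2 := mul_sub_le_sub (fun x hx => hU x (hsub hx)) (fun x hx => hV x (hsub hx)) hlo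
    set C1 : ℝ := U a' - (c + δ) * V a' with hC1
    set C2 : ℝ := U a' - (c - δ) * V a' with hC2
    obtain ⟨N2, hN2⟩ :=
      (hVtop.eventually_ge_atTop (max 1 ((|C1| + |C2|) / δ))).exists_forall_of_atTop
    refine ⟨max a' N2, fun x hx => ?_⟩
    have hxa' : x ∈ Ici a' := le_trans (le_max_left a' N2) hx
    have hVx := hN2 x (le_trans (le_max_right a' N2) hx)
    have hV1 : (1:ℝ) ≤ V x := le_trans (le_max_left _ _) hVx
    have hVpos : (0:ℝ) < V x := lt_of_lt_of_le one_pos hV1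
    have hCs : (|C1| + |C2|) / δ ≤ V x := le_trans (le_max_right _ _) hVx
    have hC1b : |C1| ≤ δ * V x := by
      rw [div_le_iff₀ hδ] at hCs
      have := abs_nonneg C2
      nlinarith
    have hC2b : |C2| ≤ δ * V x := by
      rw [div_le_iff₀ hδ] at hCs
      have := abs_nonneg C1
      nlinarith
    have hub : U x ≤ (c + δ) * V x + C1 := by
      have := h1 x hxa'
      simp only [hC1]
      nlinarith
    have hlb : (c - δ) * V x + C2 ≤ U x := by
      have := h2 x hxa'
      simp only [hC2]
      nlinarith
    have hub' : U x / V x ≤ c + δ + C1 / V x := by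
      have hd : ((c + δ) * V x + C1) / V x = c + δ + C1 / V x := by field_simp
      rw [← hd]
      gcongr
    have hlb' : c - δ + C2 / V x ≤ U x / V x := by
      have hd : ((c - δ) * V x + C2) / V x = c - δ + C2 / V x := by field_simp
      rw [← hd]
      gcongr
    have hC1v : C1 / V x ≤ δ := by
      rw [div_le_iff₀ hVpos]
      have := le_abs_self C1
      nlinarith
    have hC2v : -δ ≤ C2 / V x := by
      rw [le_div_iff₀ hVpos]
      have := neg_abs_le C2
      nlinarith
    rw [Real.dist_eq, abs_sub_lt_iff]
    constructor <;> nlinarith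

-- limit exists from eventual differentiability + eventual deriv sign
lemma limit_from_ev {W : ℝ → ℝ} (hd : ∀ᶠ x in atTop, DifferentiableAt ℝ W x)
    (hs : (∀ᶠ x in atTop, 0 ≤ deriv W x) ∨ (∀ᶠ x in atTop, deriv W x ≤ 0)) :
    ∃ L : EReal, Tendsto (fun x => (W x : EReal)) atTop (𝓝 L) := by
  rcases hs with hs | hs
  · obtain ⟨a, ha⟩ := (hd.and hs).exists_forall_of_atTop
    exact tendsto_of_deriv_sign (fun x hx => (ha x hx).1) (Or.inl fun x hx => (ha x hx).2)
  · obtain ⟨a, ha⟩ := (hd.and hs).exists_forall_of_atTop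
    exact tendsto_of_deriv_sign (fun x hx => (ha x hx).1) (Or.inr fun x hx => (ha x hx).2)

-- strictly increasing functions tending to 0 are negative
lemma neg_of_strictMonoOn_tendsto_zero {V : ℝ → ℝ} {a : ℝ} (hmono : StrictMonoOn V (Ici a))
    (hV0 : Tendsto V atTop (𝓝 0)) : ∀ x ∈ Ici a, V x < 0 := by
  intro x hx
  by_contra hcon
  push_neg at hcon
  have hx1 : x + 1 ∈ Ici a := Set.mem_Ici.mpr (le_trans (Set.mem_Ici.mp hx) (by linarith))
  have h2 : V x < V (x + 1) := hmono hx hx1 (by linarith)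
  have h3 : ∀ᶠ y in atTop, V (x + 1) ≤ V y := by
    filter_upwards [eventually_ge_atTop (x + 1)] with y hy
    exact hmono.monotoneOn hx1 (le_trans hx1 hy) hy
  have := ge_of_tendsto hV0 h3
  linarith

lemma pos_of_strictAntiOn_tendsto_zero {V : ℝ → ℝ} {a : ℝ} (hanti : StrictAntiOn V (Ici a))
    (hV0 : Tendsto V atTop (𝓝 0)) : ∀ x ∈ Ici a, 0 < V x := by
  have hmono : StrictMonoOn (fun y => -V y) (Ici a) := fun x hx y hy hxy =>
    neg_lt_neg (hanti hx hy hxy)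
  have hV0' : Tendsto (fun y => -V y) atTop (𝓝 0) := by simpa using hV0.neg
  intro x hx
  have := neg_of_strictMonoOn_tendsto_zero hmono hV0' x hx
  simpa using this

-- core comparison lemma: positive lower bound over positive → 0 denominator
lemma div_tendsto_atTop_core {U V : ℝ → ℝ} {m : ℝ} (hm : 0 < m)
    (hU : ∀ᶠ x in atTop, m ≤ U x)
    (hV0 : Tendsto V atTop (𝓝 0)) (hVpos : ∀ᶠ x in atTop, 0 < V x) :
    Tendsto (fun x => U x / V x) atTop atTop := by
  have hVin : Tendsto V atTop (𝓝[>] (0:ℝ)) :=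
    tendsto_nhdsWithin_iff.mpr ⟨hV0, hVpos⟩
  have hinv : Tendsto (fun x => (V x)⁻¹) atTop atTop := hVin.inv_tendsto_nhdsGT_zero
  have hminv : Tendsto (fun x => m * (V x)⁻¹) atTop atTop := hinv.const_mul_atTop hm
  refine tendsto_atTop_mono' atTop ?_ hminv
  filter_upwards [hU, hVpos] with x h1 h2
  rw [div_eq_mul_inv]
  exact mul_le_mul_of_nonneg_right h1 (inv_nonneg.mpr h2.le)

lemma div_tendsto_zero_den {U V : ℝ → ℝ} {LU : EReal}
    (hU : Tendsto (fun x => (U x : EReal)) atTop (𝓝 LU)) (hLU : LU ≠ 0)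
    (hV0 : Tendsto V atTop (𝓝 0))
    (hVs : (∀ᶠ x in atTop, 0 < V x) ∨ (∀ᶠ x in atTop, V x < 0)) :
    ∃ L : EReal, Tendsto (fun x => ((U x / V x : ℝ) : EReal)) atTop (𝓝 L) := by
  have hsU : ∃ m : ℝ, 0 < m ∧
      ((∀ᶠ x in atTop, m ≤ U x) ∨ (∀ᶠ x in atTop, U x ≤ -m)) := by
    induction LU using EReal.rec with
    | bot =>
      refine ⟨1, one_pos, Or.inr ?_⟩
      exact (tendsto_coe_atBot_iff.mp hU).eventually (eventually_le_atBot (-1))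
    | coe u =>
      have hu : u ≠ 0 := by
        intro h; apply hLU; rw [h]; rfl
      have hU' : Tendsto U atTop (𝓝 u) := EReal.tendsto_coe.mp hU
      rcases lt_or_gt_of_ne hu with hu' | hu'
      · refine ⟨-u/2, by linarith, Or.inr ?_⟩
        have : ∀ᶠ y in 𝓝 u, y ≤ u/2 := eventually_le_nhds (by linarith)
        filter_upwards [hU'.eventually this] with x hx
        linarith
      · refine ⟨u/2, by linarith, Or.inl ?_⟩
        have : ∀ᶠ y in 𝓝 u, u/2 ≤ y := eventually_ge_nhds (by linarith)
        exact hU'.eventually this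
    | top =>
      refine ⟨1, one_pos, Or.inl ?_⟩
      exact (tendsto_coe_atTop_iff.mp hU).eventually (eventually_ge_atTop 1)
  obtain ⟨m, hm, hcase⟩ := hsU
  have hV0' : Tendsto (fun x => -V x) atTop (𝓝 0) := by simpa using hV0.neg
  rcases hcase with hUc | hUc <;> rcases hVs with hVc | hVc
  · exact ⟨⊤, tendsto_coe_atTop_iff.mpr (div_tendsto_atTop_core hm hUc hV0 hVc)⟩
  · have hcore := div_tendsto_atTop_core hm hUc hV0'
      (by filter_upwards [hVc] with x hx; linarith)
    refine ⟨⊥, tendsto_coe_atBot_iff.mpr ?_⟩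
    have heq : (fun x => U x / V x) = fun x => -(U x / -V x) := by
      funext x; rw [div_neg, neg_neg]
    rw [heq]
    exact tendsto_neg_atTop_atBot.comp hcore
  · have hcore := div_tendsto_atTop_core hm
      (U := fun x => -U x) (by filter_upwards [hUc] with x hx; linarith) hV0 hVc
    refine ⟨⊥, tendsto_coe_atBot_iff.mpr ?_⟩
    have heq : (fun x => U x / V x) = fun x => -(-U x / V x) := by
      funext x; rw [neg_div, neg_neg]
    rw [heq]
    exact tendsto_neg_atTop_atBot.comp hcore
  · have hcore := div_tendsto_atTop_core hm
      (U := fun x => -U x) (by filter_upwards [hUc] with x hx; linarith) hV0'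
      (by filter_upwards [hVc] with x hx; linarith)
    refine ⟨⊤, tendsto_coe_atTop_iff.mpr ?_⟩
    have heq : (fun x => U x / V x) = fun x => -U x / -V x := by
      funext x; rw [neg_div_neg_eq]
    rw [heq]
    exact hcore

lemma div_lim_finite {U V : ℝ → ℝ} {LU : EReal} {v : ℝ}
    (hU : Tendsto (fun x => (U x : EReal)) atTop (𝓝 LU))
    (hV : Tendsto V atTop (𝓝 v)) (hv : v ≠ 0) :
    ∃ L : EReal, Tendsto (fun x => ((U x / V x : ℝ) : EReal)) atTop (𝓝 L) := by
  have hVinv : Tendsto (fun x => (V x)⁻¹) atTop (𝓝 v⁻¹) := hV.inv₀ hv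
  have heq : (fun x => U x / V x) = fun x => U x * (V x)⁻¹ := by
    funext x; rw [div_eq_mul_inv]
  induction LU using EReal.rec with
  | bot =>
    have hUb := tendsto_coe_atBot_iff.mp hU
    rcases lt_or_gt_of_ne hv with hv' | hv'
    · refine ⟨⊤, tendsto_coe_atTop_iff.mpr ?_⟩
      rw [heq]
      exact hUb.atBot_mul_neg (inv_lt_zero.mpr hv') hVinv
    · refine ⟨⊥, tendsto_coe_atBot_iff.mpr ?_⟩
      rw [heq]
      exact hUb.atBot_mul_pos (inv_pos.mpr hv') hVinv
  | coe u =>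
    exact ⟨((u / v : ℝ) : EReal), EReal.tendsto_coe.mpr ((EReal.tendsto_coe.mp hU).div hV hv)⟩
  | top =>
    have hUt := tendsto_coe_atTop_iff.mp hU
    rcases lt_or_gt_of_ne hv with hv' | hv'
    · refine ⟨⊥, tendsto_coe_atBot_iff.mpr ?_⟩
      rw [heq]
      exact hUt.atTop_mul_neg (inv_lt_zero.mpr hv') hVinv
    · refine ⟨⊤, tendsto_coe_atTop_iff.mpr ?_⟩
      rw [heq]
      exact hUt.atTop_mul_pos (inv_pos.mpr hv') hVinv

lemma hardy_ratio_limit (S : Subring G∞) (hS : IsHardyField S) (p q : G∞)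
    (hp : p ∈ S) (hq : q ∈ S) (hq0 : q ≠ 0) (P Q : ℝ → ℝ)
    (hP : (P : G∞) = p) (hQ : (Q : G∞) = q) :
    ∃ c : EReal, Tendsto (fun x => ((P x / Q x : ℝ) : EReal)) atTop (𝓝 c) := by
  obtain ⟨k, hkS, hk1⟩ := hS.1 q hq hq0
  obtain ⟨K, hK⟩ := Quotient.exists_rep k
  have hKk : ((K : ℝ → ℝ) : G∞) = k := hK
  have hQK : ∀ᶠ x in atTop, Q x * K x = 1 := by
    have h1 : ((fun x => Q x * K x : ℝ → ℝ) : G∞) = ((fun _ => (1:ℝ) : ℝ → ℝ) : G∞) := by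
      show (Q : G∞) * (K : G∞) = 1
      rw [hQ, hKk]; exact hk1
    exact Filter.Germ.coe_eq.mp h1
  have hrS : p * k ∈ S := S.mul_mem hp hkS
  obtain ⟨c, hc⟩ := hardy_limit S hS (p * k) hrS (fun x => P x * K x)
    (by rw [← hP, ← hKk]; rfl)
  refine ⟨c, hc.congr' ?_⟩
  filter_upwards [hQK] with x hx
  have hQx : Q x ≠ 0 := by
    intro h; rw [h, zero_mul] at hx; exact one_ne_zero hx.symm
  have hKx : K x = (Q x)⁻¹ := eq_inv_of_mul_eq_one_right (mul_comm (Q x) (K x) ▸ hx)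
  congr 1
  rw [hKx, div_eq_mul_inv]

lemma const_on_ray {V : ℝ → ℝ} {a : ℝ} (hd : ∀ x ∈ Ici a, DifferentiableAt ℝ V x)
    (h0 : ∀ x ∈ Ici a, deriv V x = 0) : ∀ x ∈ Ici a, V x = V a := by
  have h1 := sub_le_mul_sub (K := 0) hd hd
    (fun x hx => by rw [h0 x hx, zero_mul])
  have h2 := mul_sub_le_sub (K := 0) hd hd
    (fun x hx => by rw [h0 x hx, zero_mul])
  intro x hx
  have ha := h1 x hx
  have hb := h2 x hx
  rw [zero_mul] at ha hb
  linarith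

lemma not_tendsto_atTop_of_deriv_nonpos {V : ℝ → ℝ}
    (hd : ∀ᶠ x in atTop, DifferentiableAt ℝ V x)
    (hs : ∀ᶠ x in atTop, deriv V x ≤ 0) (ht : Tendsto V atTop atTop) : False := by
  obtain ⟨a, ha⟩ := (hd.and hs).exists_forall_of_atTop
  have h1 := sub_le_mul_sub (K := 0) (U := V) (V := V)
    (fun x hx => (ha x hx).1) (fun x hx => (ha x hx).1)
    (fun x hx => by rw [zero_mul]; exact (ha x hx).2)
  obtain ⟨x, hx1, hx2⟩ := ((eventually_ge_atTop a).and (ht.eventually_ge_atTop (V a + 1))).exists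
  have := h1 x hx1
  rw [zero_mul] at this
  linarith

lemma not_tendsto_atBot_of_deriv_nonneg {V : ℝ → ℝ}
    (hd : ∀ᶠ x in atTop, DifferentiableAt ℝ V x)
    (hs : ∀ᶠ x in atTop, 0 ≤ deriv V x) (ht : Tendsto V atTop atBot) : False := by
  obtain ⟨a, ha⟩ := (hd.and hs).exists_forall_of_atTop
  have h1 := mul_sub_le_sub (K := 0) (U := V) (V := V)
    (fun x hx => (ha x hx).1) (fun x hx => (ha x hx).1)
    (fun x hx => by rw [zero_mul]; exact (ha x hx).2)
  obtain ⟨x, hx1, hx2⟩ := ((eventually_ge_atTop a).and (ht.eventually_le_atBot (V a - 1))).exists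
  have := h1 x hx1
  rw [zero_mul] at this
  linarith

/-- For nonzero elements `f`, `g` of a Hardy field, the limit of
`log|f(x)| / log|g(x)|` as `x → ∞` exists in the extended reals. -/
theorem hardyField_log_ratio_tendsto
    (S : Subring (Filter.Germ (Filter.atTop : Filter ℝ) ℝ))
    (hS : IsHardyField S) (f g : ℝ → ℝ)
    (hf : (f : Filter.Germ (Filter.atTop : Filter ℝ) ℝ) ∈ S)
    (hg : (g : Filter.Germ (Filter.atTop : Filter ℝ) ℝ) ∈ S)
    (hf0 : (f : Filter.Germ (Filter.atTop : Filter ℝ) ℝ) ≠ 0)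
    (hg0 : (g : Filter.Germ (Filter.atTop : Filter ℝ) ℝ) ≠ 0) :
    ∃ L : EReal,
      Tendsto (fun x : ℝ => ((Real.log |f x| / Real.log |g x| : ℝ) : EReal))
        atTop (nhds L) := by
  classical
  obtain ⟨F, hFf, hFdiff, hF'S⟩ := hS.2 _ hf
  obtain ⟨G, hGg, hGdiff, hG'S⟩ := hS.2 _ hg
  have hFS : (F : G∞) ∈ S := by rw [hFf]; exact hf
  have hGS : (G : G∞) ∈ S := by rw [hGg]; exact hg
  have hF0 : (F : G∞) ≠ 0 := by rw [hFf]; exact hf0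
  have hG0 : (G : G∞) ≠ 0 := by rw [hGg]; exact hg0
  have hFne : ∀ᶠ x in atTop, F x ≠ 0 := by
    rcases hardy_sign_strict S hS _ hFS hF0 F rfl with h | h
    · filter_upwards [h] with x hx; exact ne_of_gt hx
    · filter_upwards [h] with x hx; exact ne_of_lt hx
  have hGne : ∀ᶠ x in atTop, G x ≠ 0 := by
    rcases hardy_sign_strict S hS _ hGS hG0 G rfl with h | h
    · filter_upwards [h] with x hx; exact ne_of_gt hx
    · filter_upwards [h] with x hx; exact ne_of_lt hx
  set U : ℝ → ℝ := fun x => Real.log (F x) with hUdef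
  set V : ℝ → ℝ := fun x => Real.log (G x) with hVdef
  have hUd : ∀ᶠ x in atTop, DifferentiableAt ℝ U x ∧ deriv U x = deriv F x / F x := by
    filter_upwards [hFdiff, hFne] with x h1 h2
    have hder := h1.hasDerivAt.log h2
    exact ⟨hder.differentiableAt, hder.deriv⟩
  have hVd : ∀ᶠ x in atTop, DifferentiableAt ℝ V x ∧ deriv V x = deriv G x / G x := by
    filter_upwards [hGdiff, hGne] with x h1 h2
    have hder := h1.hasDerivAt.log h2
    exact ⟨hder.differentiableAt, hder.deriv⟩
  have hUdiff : ∀ᶠ x in atTop, DifferentiableAt ℝ U x := hUd.mono fun x h => h.1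
  have hVdiff : ∀ᶠ x in atTop, DifferentiableAt ℝ V x := hVd.mono fun x h => h.1
  -- inverses of F and G in the field
  obtain ⟨kF, hkFS, hkF1⟩ := hS.1 _ hFS hF0
  obtain ⟨KF, hKFq⟩ := Quotient.exists_rep kF
  have hKFk : ((KF : ℝ → ℝ) : G∞) = kF := hKFq
  obtain ⟨kG, hkGS, hkG1⟩ := hS.1 _ hGS hG0
  obtain ⟨KG, hKGq⟩ := Quotient.exists_rep kG
  have hKGk : ((KG : ℝ → ℝ) : G∞) = kG := hKGq
  have hFK1 : ∀ᶠ x in atTop, F x * KF x = 1 := by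
    have h1 : ((fun x => F x * KF x : ℝ → ℝ) : G∞) = ((fun _ => (1:ℝ) : ℝ → ℝ) : G∞) := by
      show (F : G∞) * ((KF : ℝ → ℝ) : G∞) = 1
      rw [hKFk]; exact hkF1
    exact Filter.Germ.coe_eq.mp h1
  have hGK1 : ∀ᶠ x in atTop, G x * KG x = 1 := by
    have h1 : ((fun x => G x * KG x : ℝ → ℝ) : G∞) = ((fun _ => (1:ℝ) : ℝ → ℝ) : G∞) := by
      show (G : G∞) * ((KG : ℝ → ℝ) : G∞) = 1
      rw [hKGk]; exact hkG1
    exact Filter.Germ.coe_eq.mp h1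
  -- the germs of deriv U and deriv V lie in S
  have hderivU : ((deriv U : ℝ → ℝ) : G∞) = ((deriv F : ℝ → ℝ) : G∞) * kF := by
    rw [← hKFk]
    apply Filter.Germ.coe_eq.mpr
    filter_upwards [hUd, hFK1, hFne] with x h1 h2 h3
    have hKx : KF x = (F x)⁻¹ := eq_inv_of_mul_eq_one_right (mul_comm (F x) (KF x) ▸ h2)
    rw [h1.2, hKx, div_eq_mul_inv]
  have hderivV : ((deriv V : ℝ → ℝ) : G∞) = ((deriv G : ℝ → ℝ) : G∞) * kG := by
    rw [← hKGk]
    apply Filter.Germ.coe_eq.mpr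
    filter_upwards [hVd, hGK1, hGne] with x h1 h2 h3
    have hKx : KG x = (G x)⁻¹ := eq_inv_of_mul_eq_one_right (mul_comm (G x) (KG x) ▸ h2)
    rw [h1.2, hKx, div_eq_mul_inv]
  have hmemU : ((deriv U : ℝ → ℝ) : G∞) ∈ S := by rw [hderivU]; exact S.mul_mem hF'S hkFS
  have hmemV : ((deriv V : ℝ → ℝ) : G∞) ∈ S := by rw [hderivV]; exact S.mul_mem hG'S hkGS
  -- limits of U and V
  obtain ⟨LU, hLU⟩ := limit_from_ev hUdiff (hardy_sign S hS _ hmemU (deriv U) rfl)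
  obtain ⟨LV, hLV⟩ := limit_from_ev hVdiff (hardy_sign S hS _ hmemV (deriv V) rfl)
  -- reduce the goal to U / V
  suffices h : ∃ L : EReal, Tendsto (fun x => ((U x / V x : ℝ) : EReal)) atTop (𝓝 L) by
    obtain ⟨L, hL⟩ := h
    refine ⟨L, hL.congr' ?_⟩
    filter_upwards [Filter.Germ.coe_eq.mp hFf, Filter.Germ.coe_eq.mp hGg] with x h1 h2
    rw [hUdef, hVdef]
    rw [← h1, ← h2, Real.log_abs, Real.log_abs]
  clear hFf hGg hf hg hf0 hg0 hFne hGne hFdiff hGdiff hF'S hG'S hFS hGS hF0 hG0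
  -- main case analysis on LV
  induction LV using EReal.rec with
  | top =>
    have hVtop : Tendsto V atTop atTop := tendsto_coe_atTop_iff.mp hLV
    have hdV0 : ((deriv V : ℝ → ℝ) : G∞) ≠ 0 := by
      intro h0
      rw [show (0 : G∞) = ((0 : ℝ → ℝ) : G∞) from rfl] at h0
      have hev : ∀ᶠ x in atTop, deriv V x ≤ 0 := by
        filter_upwards [Filter.Germ.coe_eq.mp h0] with x hx
        simp [hx]
      exact not_tendsto_atTop_of_deriv_nonpos hVdiff hev hVtop
    have hdVpos : ∀ᶠ x in atTop, 0 < deriv V x := by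
      rcases hardy_sign_strict S hS _ hmemV hdV0 (deriv V) rfl with h | h
      · exact h
      · exact absurd hVtop
          (fun ht => not_tendsto_atTop_of_deriv_nonpos hVdiff (h.mono fun x hx => hx.le) ht)
    obtain ⟨c, hc⟩ := hardy_ratio_limit S hS _ _ hmemU hmemV hdV0 (deriv U) (deriv V) rfl rfl
    obtain ⟨a, ha⟩ := ((hUdiff.and hVdiff).and hdVpos).exists_forall_of_atTop
    exact ⟨c, hopital_ereal (fun x hx => (ha x hx).1.1) (fun x hx => (ha x hx).1.2)
      (fun x hx => (ha x hx).2) hVtop hc⟩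
  | bot =>
    have hVbot : Tendsto V atTop atBot := tendsto_coe_atBot_iff.mp hLV
    have hdV0 : ((deriv V : ℝ → ℝ) : G∞) ≠ 0 := by
      intro h0
      rw [show (0 : G∞) = ((0 : ℝ → ℝ) : G∞) from rfl] at h0
      have hev : ∀ᶠ x in atTop, 0 ≤ deriv V x := by
        filter_upwards [Filter.Germ.coe_eq.mp h0] with x hx
        simp [hx]
      exact not_tendsto_atBot_of_deriv_nonneg hVdiff hev hVbot
    have hdVneg : ∀ᶠ x in atTop, deriv V x < 0 := by
      rcases hardy_sign_strict S hS _ hmemV hdV0 (deriv V) rfl with h | h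
      · exact absurd hVbot
          (fun ht => not_tendsto_atBot_of_deriv_nonneg hVdiff (h.mono fun x hx => hx.le) ht)
      · exact h
    obtain ⟨c, hc⟩ := hardy_ratio_limit S hS _ _ hmemU hmemV hdV0 (deriv U) (deriv V) rfl rfl
    set W : ℝ → ℝ := fun x => -V x with hWdef
    have hWtop : Tendsto W atTop atTop := tendsto_neg_atBot_atTop.comp hVbot
    have hWdiff : ∀ᶠ x in atTop, DifferentiableAt ℝ W x := hVdiff.mono fun x h => h.neg
    have hWderiv : ∀ x, deriv W x = -deriv V x := fun x => deriv.neg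
    have hc2 : Tendsto (fun x => ((deriv U x / deriv W x : ℝ) : EReal)) atTop (𝓝 (-c)) := by
      have hn := hc.neg
      apply hn.congr
      intro x
      rw [hWderiv x, div_neg, ← EReal.coe_neg]
    have hWpos : ∀ᶠ x in atTop, 0 < deriv W x := by
      filter_upwards [hdVneg] with x hx
      rw [hWderiv x]; linarith
    obtain ⟨a, ha⟩ := ((hUdiff.and hWdiff).and hWpos).exists_forall_of_atTop
    have htop := hopital_ereal (fun x hx => (ha x hx).1.1) (fun x hx => (ha x hx).1.2)
      (fun x hx => (ha x hx).2) hWtop hc2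
    refine ⟨-(-c), ?_⟩
    have hfin := htop.neg
    apply hfin.congr
    intro x
    rw [hWdef]
    show -(((U x / -V x : ℝ)) : EReal) = _
    rw [div_neg, ← EReal.coe_neg, neg_neg]
  | coe v =>
    have hVv : Tendsto V atTop (𝓝 v) := EReal.tendsto_coe.mp hLV
    by_cases hv : v = 0
    · subst hv
      by_cases hdV0 : ((deriv V : ℝ → ℝ) : G∞) = 0
      · -- V is eventually constant, equal to 0
        rw [show (0 : G∞) = ((0 : ℝ → ℝ) : G∞) from rfl] at hdV0
        have hev : ∀ᶠ x in atTop, deriv V x = 0 := by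
          filter_upwards [Filter.Germ.coe_eq.mp hdV0] with x hx
          simpa using hx
        obtain ⟨a, ha⟩ := (hVdiff.and hev).exists_forall_of_atTop
        have hconst := const_on_ray (fun x hx => (ha x hx).1) (fun x hx => (ha x hx).2)
        have hVa : Tendsto V atTop (𝓝 (V a)) := by
          apply tendsto_const_nhds.congr'
          filter_upwards [eventually_ge_atTop a] with x hx
          exact (hconst x hx).symm
        have hVa0 : V a = 0 := tendsto_nhds_unique hVa hVv
        refine ⟨((0:ℝ) : EReal), tendsto_const_nhds.congr' ?_⟩
        filter_upwards [eventually_ge_atTop a] with x hx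
        rw [hconst x hx, hVa0, div_zero]
      · -- V has constant sign and tends to 0
        have hdVs := hardy_sign_strict S hS _ hmemV hdV0 (deriv V) rfl
        have hVs : (∀ᶠ x in atTop, 0 < V x) ∨ (∀ᶠ x in atTop, V x < 0) := by
          rcases hdVs with h | h
          · right
            obtain ⟨a, ha⟩ := (hVdiff.and h).exists_forall_of_atTop
            have hmono : StrictMonoOn V (Ici a) := by
              refine strictMonoOn_of_deriv_pos (convex_Ici a) ?_ ?_
              · exact fun x hx => ((ha x hx).1.continuousAt).continuousWithinAt
              · rw [interior_Ici]; exact fun x hx => (ha x (le_of_lt hx)).2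
            have := neg_of_strictMonoOn_tendsto_zero hmono hVv
            filter_upwards [eventually_ge_atTop a] with x hx
            exact this x hx
          · left
            obtain ⟨a, ha⟩ := (hVdiff.and h).exists_forall_of_atTop
            have hanti : StrictAntiOn V (Ici a) := by
              refine strictAntiOn_of_deriv_neg (convex_Ici a) ?_ ?_
              · exact fun x hx => ((ha x hx).1.continuousAt).continuousWithinAt
              · rw [interior_Ici]; exact fun x hx => (ha x (le_of_lt hx)).2
            have := pos_of_strictAntiOn_tendsto_zero hanti hVv
            filter_upwards [eventually_ge_atTop a] with x hx
            exact this x hx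
        by_cases hLU0 : LU = ((0:ℝ) : EReal)
        · -- 0/0 L'Hôpital
          have hU0 : Tendsto U atTop (𝓝 0) := EReal.tendsto_coe.mp (hLU0 ▸ hLU)
          have hgne : ∀ᶠ x in atTop, deriv V x ≠ 0 := by
            rcases hdVs with h | h
            · filter_upwards [h] with x hx; exact ne_of_gt hx
            · filter_upwards [h] with x hx; exact ne_of_lt hx
          obtain ⟨c, hc⟩ := hardy_ratio_limit S hS _ _ hmemU hmemV hdV0
            (deriv U) (deriv V) rfl rfl
          induction c using EReal.rec with
          | bot =>
            have hdiv := tendsto_coe_atBot_iff.mp hc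
            exact ⟨⊥, tendsto_coe_atBot_iff.mpr
              (deriv.lhopital_zero_atTop hUdiff hgne hU0 hVv hdiv)⟩
          | coe creal =>
            have hdiv := EReal.tendsto_coe.mp hc
            exact ⟨((creal : ℝ) : EReal), EReal.tendsto_coe.mpr
              (deriv.lhopital_zero_atTop hUdiff hgne hU0 hVv hdiv)⟩
          | top =>
            have hdiv := tendsto_coe_atTop_iff.mp hc
            exact ⟨⊤, tendsto_coe_atTop_iff.mpr
              (deriv.lhopital_zero_atTop hUdiff hgne hU0 hVv hdiv)⟩
        · exact div_tendsto_zero_den hLU hLU0 hVv hVs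
    · exact div_lim_finite hLU hVv hv
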